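/- Let A be a p×s real matrix with rank(A) = s ≤ p. Then there exists a p×s real matrix H with A = M·H if and only if there exists a p×s real matrix H' with A = M_Po·H'. (That is, the linear combinations Aᵀβ are identifiable in the Poisson-Gamma model if and only if they are identifiable in the Poisson model.) -/

import Mathlib

open Matrix Real Finset

/-- Identifiability of `Aᵀβ` is equivalent in the Poisson-Gamma and the Poisson model:
`A = M·H` for some `H` iff `A = M_Po·H'` for some `H'`. -/
theorem identifiability_equivalence
    (a b m : ℝ) (ha : 0 < a) (hb : 0 < b) (hm : 0 < m)
    (p : ℕ) (hp : 1 ≤ p)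
    (e1 : Fin p → ℝ) (he1 : e1 = fun i : Fin p => if (i : ℕ) = 0 then (1:ℝ) else 0)
    (MPo : Matrix (Fin p) (Fin p) ℝ) (hMPo : MPo.PosSemidef)
    (M : Matrix (Fin p) (Fin p) ℝ)
    (hM : M = (a / b) • (MPo -
      (e1 ⬝ᵥ (MPo *ᵥ e1) + b / m)⁻¹ •
        (MPo * Matrix.vecMulVec e1 e1 * MPo)))
    (s : ℕ) (hs : s ≤ p)
    (A : Matrix (Fin p) (Fin s) ℝ) (hrank : A.rank = s) :
    (∃ H : Matrix (Fin p) (Fin s) ℝ, A = M * H) ↔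
    (∃ H' : Matrix (Fin p) (Fin s) ℝ, A = MPo * H') := by
  haveI : NeZero p := ⟨by omega⟩
  have he : e1 = Pi.single (0 : Fin p) (1 : ℝ) := by
    ext i
    rw [he1]
    simp only [Pi.single_apply, Fin.ext_iff, Fin.val_zero]
  set t : ℝ := e1 ⬝ᵥ (MPo *ᵥ e1) with ht
  have htnn : 0 ≤ t := by
    have := hMPo.dotProduct_mulVec_nonneg e1
    simpa [ht] using this
  set c : ℝ := t + b / m with hcdef
  have hcpos : 0 < c := by positivity
  have hc : c ≠ 0 := hcpos.ne'
  set K : Matrix (Fin p) (Fin p) ℝ := Matrix.vecMulVec e1 e1 * MPo with hK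
  have hKapp : ∀ i j, K i j = e1 i * MPo 0 j := by
    intro i j
    simp [hK, Matrix.mul_apply, Matrix.vecMulVec_apply, he, Pi.single_apply,
      mul_ite, ite_mul, Finset.sum_ite_eq]
  have ht00 : t = MPo 0 0 := by
    simp [ht, dotProduct, Matrix.mulVec, dotProduct, he, Pi.single_apply,
      mul_ite, ite_mul, Finset.sum_ite_eq]
  have hKK : K * K = t • K := by
    ext i j
    simp only [Matrix.mul_apply, Matrix.smul_apply, smul_eq_mul]
    rw [hKapp i j]
    have : ∀ k, K i k * K k j = (e1 i * MPo 0 k) * (e1 k * MPo 0 j) := by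
      intro k; rw [hKapp i k, hKapp k j]
    rw [Finset.sum_congr rfl fun k _ => this k]
    simp [he, Pi.single_apply, mul_ite, ite_mul, Finset.sum_ite_eq, ht00]
  set N : Matrix (Fin p) (Fin p) ℝ := 1 - c⁻¹ • K with hN
  set Ninv : Matrix (Fin p) (Fin p) ℝ := 1 + (m / b) • K with hNinv
  have hNNinv : N * Ninv = 1 := by
    have hcoef : m / b - (c⁻¹ + c⁻¹ * (m / b) * t) = 0 := by
      rw [hcdef]
      have hb' := hb.ne'
      have hm' := hm.ne'
      have h1 : t + b / m ≠ 0 := by rw [← hcdef]; exact hc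
      field_simp
      ring
    rw [hN, hNinv]
    rw [Matrix.sub_mul, Matrix.one_mul, Matrix.mul_add, Matrix.mul_one,
      Matrix.smul_mul, Matrix.mul_smul, hKK]
    have hlin : (1 : Matrix (Fin p) (Fin p) ℝ) + (m / b) • K -
        (c⁻¹ • K + c⁻¹ • (m / b) • t • K) = 1 +
        (m / b - (c⁻¹ + c⁻¹ * (m / b) * t)) • K := by
      module
    rw [hlin, hcoef, zero_smul, add_zero]
  have hMN : M = (a / b) • (MPo * N) := by
    rw [hM, hN, Matrix.mul_sub, Matrix.mul_one, Matrix.mul_smul, hK, ← Matrix.mul_assoc]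
  have hab : b / a * (a / b) = 1 := by field_simp
  constructor
  · rintro ⟨H, rfl⟩
    refine ⟨(a / b) • (N * H), ?_⟩
    rw [hMN, Matrix.smul_mul, Matrix.mul_smul, Matrix.mul_assoc]
  · rintro ⟨H', rfl⟩
    refine ⟨(b / a) • (Ninv * H'), ?_⟩
    rw [hMN, Matrix.mul_smul, Matrix.smul_mul, smul_smul, hab, one_smul,
      Matrix.mul_assoc, ← Matrix.mul_assoc N, hNNinv, Matrix.one_mul]
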